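/- Let A be a commutative ring and I a finitely generated ideal. For any A-module M, the natural maps A/I^k ⊗ M → A/I^k ⊗ M̂ (induced by completion M → M̂ = lim_j M/I^j M) are isomorphisms for all k, hence the completion of M̂ is isomorphic to M̂ (completion is idempotent on quotients by powers of I). -/

import Mathlib

universe u

open AdicCompletion Submodule

section Aux

variable {A : Type u} [CommRing A] (I : Ideal A) (M : Type u) [AddCommGroup M] [Module A M]

private lemma exists_sum_of_mem_smul {J : Ideal A} {s : Finset A}
    (hs : Submodule.span A (s : Set A) = J) (N : Submodule A M) {x : M} (hx : x ∈ J • N) :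
    ∃ m : A → M, (∀ c, m c ∈ N) ∧ x = ∑ c ∈ s, c • m c := by
  refine Submodule.smul_induction_on hx ?_ ?_
  · intro r hr n hn
    rw [← hs] at hr
    obtain ⟨a, ha⟩ := mem_span_finset.mp hr
    refine ⟨fun c => a c • n, fun c => N.smul_mem _ hn, ?_⟩
    rw [← ha.2, Finset.sum_smul]
    exact Finset.sum_congr rfl fun c _ => by rw [smul_eq_mul, mul_comm, mul_smul]
  · rintro x y ⟨mx, hmx, rfl⟩ ⟨my, hmy, rfl⟩
    exact ⟨fun c => mx c + my c, fun c => N.add_mem (hmx c) (hmy c),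
      by simp [smul_add, Finset.sum_add_distrib]⟩

private lemma smul_top_le_ker_eval (k : ℕ) :
    (I ^ k • ⊤ : Submodule A (AdicCompletion I M)) ≤ LinearMap.ker (eval I M k) := by
  refine Submodule.smul_le.mpr fun r hr x _ => ?_
  simp only [LinearMap.mem_ker, map_smul]
  obtain ⟨m, hm⟩ := Submodule.Quotient.mk_surjective _ (eval I M k x)
  rw [← hm, ← Submodule.Quotient.mk_smul]
  exact (Submodule.Quotient.mk_eq_zero _).mpr (Submodule.smul_mem_smul hr Submodule.mem_top)

/-- Key lemma (Stacks 05GG): if the `k`-th component of an element of the adic completion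
vanishes, then the element lies in `I ^ k • ⊤`. -/
private lemma mem_smul_top_of_val_eq_zero (hI : I.FG) (k : ℕ) {x : AdicCompletion I M}
    (hx : x.val k = 0) : x ∈ (I ^ k • ⊤ : Submodule A (AdicCompletion I M)) := by
  obtain ⟨f, rfl⟩ := AdicCompletion.mk_surjective I M x
  obtain ⟨s, hs⟩ := Submodule.FG.pow hI k
  have h0 : f.val k ∈ (I ^ k • ⊤ : Submodule A M) := by
    simpa [Submodule.Quotient.mk_eq_zero] using hx
  -- deltas
  set d : ℕ → M := fun n => match n with
    | 0 => f.val k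
    | (m + 1) => f.val (m + 1 + k) - f.val (m + k) with hd_def
  have hsmul : ∀ n : ℕ, (I ^ (n + k) • ⊤ : Submodule A M)
      = I ^ k • (I ^ n • ⊤ : Submodule A M) := by
    intro n
    rw [pow_add, mul_comm, ← smul_eq_mul, Submodule.smul_assoc]
  have hdmem : ∀ n : ℕ, d (n + 1) ∈ I ^ k • (I ^ n • ⊤ : Submodule A M) := by
    intro n
    rw [← hsmul n]
    exact SModEq.sub_mem.mp (f.property (show n + k ≤ n + 1 + k by omega)).symm
  have hd : ∀ n, ∃ m : A → M, (∀ c, m c ∈ (I ^ n • ⊤ : Submodule A M))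
      ∧ d (n + 1) = ∑ c ∈ s, c • m c :=
    fun n => exists_sum_of_mem_smul M hs _ (hdmem n)
  choose D hD1 hD2 using hd
  obtain ⟨D0, _, hD0⟩ := exists_sum_of_mem_smul M hs (⊤ : Submodule A M) h0
  set De : ℕ → A → M := fun n => match n with
    | 0 => D0
    | (m + 1) => D m with hDe_def
  -- the cauchy sequences of partial sums
  have hw : ∀ c : A, IsAdicCauchy I M (fun n => ∑ l ∈ Finset.range (n + 1), De l c) := by
    intro c
    rw [isAdicCauchy_iff]
    intro n
    rw [SModEq.sub_mem, Finset.sum_range_succ (n := n + 1)]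
    simpa using Submodule.neg_mem _ (hD1 n c)
  set W : A → AdicCauchySequence I M := fun c => ⟨_, hw c⟩ with hW_def
  have htel : ∀ n, (∑ l ∈ Finset.range (n + 1), d l) = f.val (n + k) := by
    intro n
    induction n with
    | zero => simp [hd_def]
    | succ n ih =>
        rw [Finset.sum_range_succ, ih]
        show f.val (n + k) + (f.val (n + 1 + k) - f.val (n + k)) = f.val (n + 1 + k)
        abel
  have key : AdicCompletion.mk I M f = ∑ c ∈ s, c • AdicCompletion.mk I M (W c) := by
    ext n
    rw [AdicCompletion.val_sum_apply]
    have h1 : ∀ c ∈ s, (c • AdicCompletion.mk I M (W c)).val n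
        = Submodule.mkQ (I ^ n • ⊤ : Submodule A M)
            (c • (∑ l ∈ Finset.range (n + 1), De l c)) := fun c _ => rfl
    rw [Finset.sum_congr rfl h1, ← map_sum]
    have hswap : (∑ c ∈ s, c • ∑ l ∈ Finset.range (n + 1), De l c)
        = ∑ l ∈ Finset.range (n + 1), d l := by
      simp_rw [Finset.smul_sum]
      rw [Finset.sum_comm]
      refine Finset.sum_congr rfl fun l _ => ?_
      match l with
      | 0 => exact hD0.symm
      | (m + 1) => exact (hD2 m).symm
    rw [hswap, htel n]
    exact (AdicCauchySequence.mk_eq_mk (Nat.le_add_right n k) f).symm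
  rw [key]
  refine Submodule.sum_mem _ fun c hc => Submodule.smul_mem_smul ?_ Submodule.mem_top
  rw [← hs]
  exact Submodule.subset_span hc

private lemma le_comap_of (k : ℕ) :
    (I ^ k • ⊤ : Submodule A M) ≤
      (I ^ k • ⊤ : Submodule A (AdicCompletion I M)).comap (of I M) := by
  refine Submodule.smul_le.mpr fun r hr m _ => ?_
  simp only [Submodule.mem_comap, map_smul]
  exact Submodule.smul_mem_smul hr Submodule.mem_top

private lemma mapQ_of_bijective (hI : I.FG) (k : ℕ) :
    Function.Bijective (Submodule.mapQ (I ^ k • ⊤ : Submodule A M)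
      (I ^ k • ⊤ : Submodule A (AdicCompletion I M)) (of I M) (le_comap_of I M k)) := by
  constructor
  · rw [← LinearMap.ker_eq_bot, eq_bot_iff]
    intro a ha
    obtain ⟨m, rfl⟩ := Submodule.Quotient.mk_surjective _ a
    rw [LinearMap.mem_ker, Submodule.mapQ_apply, Submodule.Quotient.mk_eq_zero] at ha
    have := smul_top_le_ker_eval I M k ha
    rw [LinearMap.mem_ker] at this
    have hval : Submodule.Quotient.mk (p := (I ^ k • ⊤ : Submodule A M)) m = 0 := this
    simpa [Submodule.mem_bot, Submodule.Quotient.mk_eq_zero] using hval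
  · intro a
    obtain ⟨x, rfl⟩ := Submodule.Quotient.mk_surjective _ a
    obtain ⟨m, hm⟩ := Submodule.Quotient.mk_surjective _ (x.val k)
    refine ⟨Submodule.Quotient.mk m, ?_⟩
    rw [Submodule.mapQ_apply]
    rw [Submodule.Quotient.eq]
    refine mem_smul_top_of_val_eq_zero I M hI k ?_
    show (of I M m - x).val k = 0
    rw [AdicCompletion.val_sub_apply, of_apply, Submodule.mkQ_apply, hm, sub_self]

private lemma tensor_natural (k : ℕ) :
    (TensorProduct.quotTensorEquivQuotSMul (AdicCompletion I M) (I ^ k)).toLinearMap ∘ₗ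
      LinearMap.lTensor (A ⧸ I ^ k) (of I M) =
    (Submodule.mapQ (I ^ k • ⊤ : Submodule A M)
        (I ^ k • ⊤ : Submodule A (AdicCompletion I M)) (of I M) (le_comap_of I M k)) ∘ₗ
      (TensorProduct.quotTensorEquivQuotSMul M (I ^ k)).toLinearMap := by
  refine TensorProduct.ext' fun r m => ?_
  obtain ⟨r, rfl⟩ := Ideal.Quotient.mk_surjective r
  simp only [LinearMap.comp_apply, LinearEquiv.coe_coe, LinearMap.lTensor_tmul,
    TensorProduct.quotTensorEquivQuotSMul_mk_tmul, Submodule.mapQ_apply, map_smul]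

end Aux

/-- Let `A` be a commutative Noetherian ring and `I` a finitely generated ideal.  For any
`A`-module `M`, the natural maps `A/I^k ⊗ M → A/I^k ⊗ M̂` induced by the completion map
`M → M̂` are isomorphisms for all `k`, and hence the completion of `M̂` is isomorphic to
`M̂` (completion is idempotent). -/
theorem tensor_quotient_completion_bijective_and_idempotent {A : Type u} [CommRing A]
    [IsNoetherianRing A] (I : Ideal A) (hI : I.FG) (M : Type u) [AddCommGroup M]
    [Module A M] :
    (∀ k : ℕ, Function.Bijective
        (LinearMap.lTensor (A ⧸ I ^ k) (AdicCompletion.of I M))) ∧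
    Function.Bijective (AdicCompletion.of I (AdicCompletion I M)) := by
  constructor
  · intro k
    have h := tensor_natural I M k
    have : LinearMap.lTensor (A ⧸ I ^ k) (AdicCompletion.of I M) =
        (TensorProduct.quotTensorEquivQuotSMul (AdicCompletion I M) (I ^ k)).symm.toLinearMap ∘ₗ
        ((Submodule.mapQ (I ^ k • ⊤ : Submodule A M)
            (I ^ k • ⊤ : Submodule A (AdicCompletion I M)) (AdicCompletion.of I M)
            (le_comap_of I M k)) ∘ₗ
          (TensorProduct.quotTensorEquivQuotSMul M (I ^ k)).toLinearMap) := by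
      rw [← h]
      ext x
      simp
    rw [this]
    exact ((TensorProduct.quotTensorEquivQuotSMul (AdicCompletion I M)
        (I ^ k)).symm.bijective).comp
      ((mapQ_of_bijective I M hI k).comp
        (TensorProduct.quotTensorEquivQuotSMul M (I ^ k)).bijective)
  · constructor
    · intro x y hxy
      ext n
      have h : (AdicCompletion.of I (AdicCompletion I M) (x - y)).val n = 0 := by
        rw [map_sub, hxy, sub_self]; rfl
      have hmem : x - y ∈ (I ^ n • ⊤ : Submodule A (AdicCompletion I M)) := by
        rw [AdicCompletion.of_apply, Submodule.mkQ_apply, Submodule.Quotient.mk_eq_zero] at h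
        exact h
      have := smul_top_le_ker_eval I M n hmem
      rw [LinearMap.mem_ker] at this
      have hv : (x - y).val n = 0 := this
      rw [AdicCompletion.val_sub] at hv
      exact sub_eq_zero.mp hv
    · intro y
      -- choose lifts of the components of y
      choose z hz using fun n => Submodule.Quotient.mk_surjective
        (I ^ n • ⊤ : Submodule A (AdicCompletion I M)) (y.val n)
      have hcomp : ∀ {m n : ℕ} (hmn : m ≤ n),
          transitionMap I M hmn ((z n).val n) = (z m).val m := by
        intro m n hmn
        have hy := y.property hmn
        -- z n - z m ∈ I ^ m • ⊤
        have hmem : z n - z m ∈ (I ^ m • ⊤ : Submodule A (AdicCompletion I M)) := by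
          rw [← Submodule.Quotient.eq]
          show Submodule.Quotient.mk (z n) = Submodule.Quotient.mk (z m)
          rw [hz m, ← hy, ← hz n]
          rfl
        have := smul_top_le_ker_eval I M m hmem
        rw [LinearMap.mem_ker] at this
        have hv : (z n - z m).val m = 0 := this
        rw [AdicCompletion.val_sub_apply, sub_eq_zero] at hv
        exact ((z n).property hmn).trans hv
      set x : AdicCompletion I M := ⟨fun n => (z n).val n, fun {m n} hmn => hcomp hmn⟩
        with hx_def
      refine ⟨x, ?_⟩
      ext n
      show Submodule.Quotient.mk x = y.val n
      rw [← hz n, Submodule.Quotient.eq]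
      refine mem_smul_top_of_val_eq_zero I M hI n ?_
      rw [AdicCompletion.val_sub]
      show (z n).val n - (z n).val n = 0
      exact sub_self _
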